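/- Let β > 0 and b¹, b² ∈ ℝ^d. Suppose λ¹ maximizes D_{β,b¹} over ℝ^d and λ² maximizes D_{β,b²} over ℝ^d. Then ‖λ¹ − λ²‖₂ ≤ (2/β²)·‖b¹ − b²‖₂. -/

import Mathlib

open MeasureTheory

/-- Euclidean inner product on `ℝ^d`. -/
noncomputable def dotd {d : ℕ} (lam v : Fin d → ℝ) : ℝ := ∑ i, lam i * v i

/-- The log-normalizer `Λ_λ = log ∫ exp⟨λ, φ(z)⟩ dp̂(z)`. -/
noncomputable def LamZ {Z : Type*} [MeasurableSpace Z] (phat : Measure Z)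
    {d : ℕ} (φ : Z → Fin d → ℝ) (lam : Fin d → ℝ) : ℝ :=
  Real.log (∫ z, Real.exp (dotd lam (φ z)) ∂phat)

/-- The `ℓ₂²`-regularized dual objective `D_{β,b}(λ) = ⟨λ,b⟩ − Λ_λ − (β²/4)‖λ‖₂²`. -/
noncomputable def Dreg {Z : Type*} [MeasurableSpace Z] (phat : Measure Z)
    {d : ℕ} (φ : Z → Fin d → ℝ) (β : ℝ) (b lam : Fin d → ℝ) : ℝ :=
  dotd lam b - LamZ phat φ lam - (β ^ 2 / 4) * ∑ i, (lam i) ^ 2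

section Aux

variable {Z : Type*} [MeasurableSpace Z] (phat : Measure Z) [IsProbabilityMeasure phat]
  {d : ℕ} {φ : Z → Fin d → ℝ}

lemma meas_dotd (hφm : Measurable φ) (lam : Fin d → ℝ) :
    Measurable fun z => dotd lam (φ z) := by
  unfold dotd
  exact Finset.univ.measurable_sum fun i _ =>
    (measurable_const.mul ((measurable_pi_apply i).comp hφm))

lemma exp_int (hφm : Measurable φ) {C : ℝ} (hφb : ∀ z i, |φ z i| ≤ C) (lam : Fin d → ℝ) :
    Integrable (fun z => Real.exp (dotd lam (φ z))) phat := by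
  refine Integrable.mono' (integrable_const (Real.exp (∑ i, |lam i| * C)))
    ((meas_dotd hφm lam).exp.aestronglyMeasurable) (Filter.Eventually.of_forall fun z => ?_)
  rw [Real.norm_eq_abs, abs_of_pos (Real.exp_pos _)]
  refine Real.exp_le_exp.mpr ?_
  calc dotd lam (φ z) ≤ ∑ i, |lam i * φ z i| :=
        Finset.sum_le_sum fun i _ => le_abs_self _
    _ ≤ ∑ i, |lam i| * C := by
        refine Finset.sum_le_sum fun i _ => ?_
        rw [abs_mul]
        exact mul_le_mul_of_nonneg_left (hφb z i) (abs_nonneg _)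

lemma int_exp_pos (hφm : Measurable φ) {C : ℝ} (hφb : ∀ z i, |φ z i| ≤ C) (lam : Fin d → ℝ) :
    0 < ∫ z, Real.exp (dotd lam (φ z)) ∂phat :=
  integral_exp_pos (exp_int phat hφm hφb lam)

/-- Hölder's inequality for exponential integrals. -/
lemma exp_holder {A B : Z → ℝ} (hA : Measurable A) (hB : Measurable B)
    (hiA : Integrable (fun z => Real.exp (A z)) phat)
    (hiB : Integrable (fun z => Real.exp (B z)) phat)
    (hiM : ∀ t : ℝ, Integrable (fun z => Real.exp ((1 - t) * A z + t * B z)) phat)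
    {t : ℝ} (ht : t ∈ Set.Ioo (0:ℝ) 1) :
    ∫ z, Real.exp ((1 - t) * A z + t * B z) ∂phat ≤
      (∫ z, Real.exp (A z) ∂phat) ^ (1 - t) * (∫ z, Real.exp (B z) ∂phat) ^ t := by
  obtain ⟨ht0, ht1⟩ := ht
  have hs0 : (0:ℝ) < 1 - t := by linarith
  have hpq : Real.HolderConjugate (1 - t)⁻¹ t⁻¹ := by
    constructor
    · rw [inv_inv, inv_inv, inv_one]; ring
    · exact inv_pos.mpr hs0
    · exact inv_pos.mpr ht0
  have hAexp : 0 < ∫ z, Real.exp (A z) ∂phat := integral_exp_pos hiA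
  have hBexp : 0 < ∫ z, Real.exp (B z) ∂phat := integral_exp_pos hiB
  have key := ENNReal.lintegral_mul_le_Lp_mul_Lq phat hpq
    (f := fun z => ENNReal.ofReal (Real.exp ((1 - t) * A z)))
    (g := fun z => ENNReal.ofReal (Real.exp (t * B z)))
    (((measurable_const.mul hA).exp.ennreal_ofReal).aemeasurable)
    (((measurable_const.mul hB).exp.ennreal_ofReal).aemeasurable)
  have hfg : ∀ z, ENNReal.ofReal (Real.exp ((1 - t) * A z)) *
      ENNReal.ofReal (Real.exp (t * B z)) =
      ENNReal.ofReal (Real.exp ((1 - t) * A z + t * B z)) := fun z => by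
    rw [← ENNReal.ofReal_mul (Real.exp_pos _).le, ← Real.exp_add]
  have hfp : ∀ z, ENNReal.ofReal (Real.exp ((1 - t) * A z)) ^ ((1 - t)⁻¹) =
      ENNReal.ofReal (Real.exp (A z)) := fun z => by
    rw [ENNReal.ofReal_rpow_of_pos (Real.exp_pos _), ← Real.exp_mul]
    congr 1
    field_simp
  have hgq : ∀ z, ENNReal.ofReal (Real.exp (t * B z)) ^ (t⁻¹) =
      ENNReal.ofReal (Real.exp (B z)) := fun z => by
    rw [ENNReal.ofReal_rpow_of_pos (Real.exp_pos _), ← Real.exp_mul]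
    congr 1
    field_simp
  simp only [Pi.mul_apply, one_div, inv_inv, hfg, hfp, hgq] at key
  rw [← ofReal_integral_eq_lintegral_ofReal (hiM t)
      (Filter.Eventually.of_forall fun z => (Real.exp_pos _).le),
    ← ofReal_integral_eq_lintegral_ofReal hiA
      (Filter.Eventually.of_forall fun z => (Real.exp_pos _).le),
    ← ofReal_integral_eq_lintegral_ofReal hiB
      (Filter.Eventually.of_forall fun z => (Real.exp_pos _).le),
    ENNReal.ofReal_rpow_of_pos hAexp, ENNReal.ofReal_rpow_of_pos hBexp,
    ← ENNReal.ofReal_mul (Real.rpow_nonneg hAexp.le _)] at key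
  rwa [← ENNReal.ofReal_le_ofReal_iff
    (mul_nonneg (Real.rpow_nonneg hAexp.le _) (Real.rpow_nonneg hBexp.le _))]

lemma dotd_combo (t : ℝ) (x y v : Fin d → ℝ) :
    dotd (fun i => (1 - t) * x i + t * y i) v = (1 - t) * dotd x v + t * dotd y v := by
  simp only [dotd, Finset.mul_sum, ← Finset.sum_add_distrib]
  exact Finset.sum_congr rfl fun i _ => by ring

lemma LamZ_combo_le (hφm : Measurable φ) {C : ℝ} (hφb : ∀ z i, |φ z i| ≤ C)
    (x y : Fin d → ℝ) {t : ℝ} (ht : t ∈ Set.Ioo (0:ℝ) 1) :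
    LamZ phat φ (fun i => (1 - t) * x i + t * y i) ≤
      (1 - t) * LamZ phat φ x + t * LamZ phat φ y := by
  have hx := int_exp_pos phat hφm hφb x
  have hy := int_exp_pos phat hφm hφb y
  have hH := exp_holder phat (meas_dotd hφm x) (meas_dotd hφm y)
    (exp_int phat hφm hφb x) (exp_int phat hφm hφb y)
    (fun s => by
      have := exp_int phat hφm hφb (fun i => (1 - s) * x i + s * y i)
      simpa only [dotd_combo] using this) ht
  unfold LamZ
  have hcombo : ∀ z, dotd (fun i => (1 - t) * x i + t * y i) (φ z) =
      (1 - t) * dotd x (φ z) + t * dotd y (φ z) := fun z => dotd_combo t x y (φ z)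
  simp only [hcombo]
  calc Real.log (∫ z, Real.exp ((1 - t) * dotd x (φ z) + t * dotd y (φ z)) ∂phat)
      ≤ Real.log ((∫ z, Real.exp (dotd x (φ z)) ∂phat) ^ (1 - t) *
          (∫ z, Real.exp (dotd y (φ z)) ∂phat) ^ t) := by
        have hpos : 0 < ∫ z, Real.exp ((1 - t) * dotd x (φ z) + t * dotd y (φ z)) ∂phat := by
          have h0 := int_exp_pos phat hφm hφb (fun i => (1 - t) * x i + t * y i)
          simpa only [dotd_combo] using h0
        exact Real.log_le_log hpos hH
    _ = (1 - t) * Real.log (∫ z, Real.exp (dotd x (φ z)) ∂phat) +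
        t * Real.log (∫ z, Real.exp (dotd y (φ z)) ∂phat) := by
        rw [Real.log_mul (Real.rpow_pos_of_pos hx _).ne' (Real.rpow_pos_of_pos hy _).ne',
          Real.log_rpow hx, Real.log_rpow hy]

/-- Strong concavity at the maximizer. -/
lemma key_ineq (hφm : Measurable φ) {C : ℝ} (hφb : ∀ z i, |φ z i| ≤ C)
    {β : ℝ} (hβ : 0 < β) (b lamstar : Fin d → ℝ)
    (hmax : ∀ lam, Dreg phat φ β b lam ≤ Dreg phat φ β b lamstar) (lam : Fin d → ℝ) :
    Dreg phat φ β b lam + (β ^ 2 / 4) * ∑ i, (lamstar i - lam i) ^ 2 ≤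
      Dreg phat φ β b lamstar := by
  set S := ∑ i, (lamstar i - lam i) ^ 2 with hS
  have hSnn : 0 ≤ S := Finset.sum_nonneg fun i _ => sq_nonneg _
  have hstep : ∀ t ∈ Set.Ioo (0:ℝ) 1,
      Dreg phat φ β b lam + (β ^ 2 / 4) * ((1 - t) * S) ≤ Dreg phat φ β b lamstar := by
    intro t ht
    set m := fun i => (1 - t) * lamstar i + t * lam i with hm
    have hL := LamZ_combo_le phat hφm hφb lamstar lam ht
    have hquad : ∑ i, (m i) ^ 2 =
        (1 - t) * ∑ i, (lamstar i) ^ 2 + t * ∑ i, (lam i) ^ 2 - t * (1 - t) * S := by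
      rw [hS]
      simp only [hm, Finset.mul_sum, ← Finset.sum_add_distrib, ← Finset.sum_sub_distrib]
      exact Finset.sum_congr rfl fun i _ => by ring
    have hlow : (1 - t) * Dreg phat φ β b lamstar + t * Dreg phat φ β b lam +
        (β ^ 2 / 4) * (t * (1 - t) * S) ≤ Dreg phat φ β b m := by
      unfold Dreg
      rw [dotd_combo, hquad]
      nlinarith [hL, sq_nonneg β]
    have hmm := hmax m
    have ht0 := ht.1
    have hprod : t * (Dreg phat φ β b lam + (β ^ 2 / 4) * ((1 - t) * S)) ≤
        t * Dreg phat φ β b lamstar := by nlinarith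
    exact le_of_mul_le_mul_left hprod ht0
  have hten : Filter.Tendsto
      (fun t : ℝ => Dreg phat φ β b lam + (β ^ 2 / 4) * ((1 - t) * S))
      (nhdsWithin 0 (Set.Ioi 0)) (nhds (Dreg phat φ β b lam + (β ^ 2 / 4) * ((1 - 0) * S))) :=
    (Continuous.tendsto (by continuity) 0).mono_left nhdsWithin_le_nhds
  have hev : ∀ᶠ t in nhdsWithin (0:ℝ) (Set.Ioi 0),
      Dreg phat φ β b lam + (β ^ 2 / 4) * ((1 - t) * S) ≤ Dreg phat φ β b lamstar :=
    Filter.eventually_iff_exists_mem.mpr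
      ⟨Set.Ioo 0 1, Ioo_mem_nhdsGT_of_mem ⟨le_refl 0, zero_lt_one⟩, hstep⟩
  have := le_of_tendsto hten hev
  linarith [this]

end Aux

theorem stmt7 {Z : Type*} [MeasurableSpace Z] (phat : Measure Z) [IsProbabilityMeasure phat]
    {d : ℕ} (φ : Z → Fin d → ℝ) (hφm : Measurable φ)
    (C : ℝ) (hφb : ∀ z i, |φ z i| ≤ C)
    (β : ℝ) (hβ : 0 < β) (b₁ b₂ : Fin d → ℝ) (lam1 lam2 : Fin d → ℝ)
    (hmax₁ : ∀ lam, Dreg phat φ β b₁ lam ≤ Dreg phat φ β b₁ lam1)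
    (hmax₂ : ∀ lam, Dreg phat φ β b₂ lam ≤ Dreg phat φ β b₂ lam2) :
    Real.sqrt (∑ i, (lam1 i - lam2 i) ^ 2) ≤
      (2 / β ^ 2) * Real.sqrt (∑ i, (b₁ i - b₂ i) ^ 2) := by
  set S := ∑ i, (lam1 i - lam2 i) ^ 2 with hS
  set T := ∑ i, (b₁ i - b₂ i) ^ 2 with hT
  have hSnn : 0 ≤ S := Finset.sum_nonneg fun i _ => sq_nonneg _
  have hTnn : 0 ≤ T := Finset.sum_nonneg fun i _ => sq_nonneg _
  have hb2 : (0:ℝ) < β ^ 2 := by positivity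
  have h1 := key_ineq phat hφm hφb hβ b₁ lam1 hmax₁ lam2
  have h2 := key_ineq phat hφm hφb hβ b₂ lam2 hmax₂ lam1
  have hsym : ∑ i, (lam2 i - lam1 i) ^ 2 = S := by
    rw [hS]; exact Finset.sum_congr rfl fun i _ => by ring
  rw [hsym] at h2
  -- difference of objectives
  have hdiff : ∀ lam : Fin d → ℝ,
      Dreg phat φ β b₁ lam - Dreg phat φ β b₂ lam = ∑ i, lam i * (b₁ i - b₂ i) := by
    intro lam
    have hd : dotd lam b₁ - dotd lam b₂ = ∑ i, lam i * (b₁ i - b₂ i) := by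
      unfold dotd
      rw [← Finset.sum_sub_distrib]
      exact Finset.sum_congr rfl fun i _ => by ring
    unfold Dreg
    linarith [hd]
  have hP : (β ^ 2 / 2) * S ≤ ∑ i, (lam1 i - lam2 i) * (b₁ i - b₂ i) := by
    have e1 := hdiff lam1
    have e2 := hdiff lam2
    have hsplit : ∑ i, (lam1 i - lam2 i) * (b₁ i - b₂ i) =
        (∑ i, lam1 i * (b₁ i - b₂ i)) - ∑ i, lam2 i * (b₁ i - b₂ i) := by
      rw [← Finset.sum_sub_distrib]
      exact Finset.sum_congr rfl fun i _ => by ring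
    rw [hsplit, ← e1, ← e2]
    linarith
  have hCS : ∑ i, (lam1 i - lam2 i) * (b₁ i - b₂ i) ≤ Real.sqrt S * Real.sqrt T := by
    have h := Finset.sum_mul_sq_le_sq_mul_sq Finset.univ
      (fun i => lam1 i - lam2 i) (fun i => b₁ i - b₂ i)
    calc ∑ i, (lam1 i - lam2 i) * (b₁ i - b₂ i)
        ≤ |∑ i, (lam1 i - lam2 i) * (b₁ i - b₂ i)| := le_abs_self _
      _ = Real.sqrt ((∑ i, (lam1 i - lam2 i) * (b₁ i - b₂ i)) ^ 2) :=
          (Real.sqrt_sq_eq_abs _).symm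
      _ ≤ Real.sqrt (S * T) := Real.sqrt_le_sqrt (by rw [hS, hT]; exact h)
      _ = Real.sqrt S * Real.sqrt T := Real.sqrt_mul hSnn _
  have hfinal : (β ^ 2 / 2) * S ≤ Real.sqrt S * Real.sqrt T := le_trans hP hCS
  rcases eq_or_lt_of_le hSnn with hS0 | hS0
  · rw [← hS0, Real.sqrt_zero]
    positivity
  · have hsq : Real.sqrt S * Real.sqrt S = S := Real.mul_self_sqrt hSnn
    have hspos : 0 < Real.sqrt S := Real.sqrt_pos.mpr hS0
    have : (β ^ 2 / 2) * (Real.sqrt S * Real.sqrt S) ≤ Real.sqrt S * Real.sqrt T := by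
      rw [hsq]; exact hfinal
    have h3 : (β ^ 2 / 2) * Real.sqrt S ≤ Real.sqrt T := by
      have := (mul_le_mul_iff_of_pos_right hspos).mp (by linarith [this] : (β ^ 2 / 2) * Real.sqrt S * Real.sqrt S ≤ Real.sqrt T * Real.sqrt S)
      exact this
    rw [div_mul_eq_mul_div, le_div_iff₀ hb2] at *
    nlinarith [h3]
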